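/- arXiv:2109.06666 — 3 statements merged into one kernel-verified Lean document; each statement's English description precedes it below -/
import Mathlib

section
/- For any tree T of order n ≥ 2, γ_rdR(T) ≥ n + 1, with equality if and only if T is a star K_{1,n−1}. -/
open Finset

/-- A restrained double Roman dominating function. -/
def IsRDRD {V : Type*} (G : SimpleGraph V) (f : V → ℕ) : Prop :=
  (∀ v, f v ≤ 3) ∧
  (∀ v, f v = 0 →
    (∃ u, G.Adj v u ∧ f u = 3) ∨
    (∃ u w, G.Adj v u ∧ G.Adj v w ∧ u ≠ w ∧ f u = 2 ∧ f w = 2)) ∧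
  (∀ v, f v = 1 → ∃ u, G.Adj v u ∧ 2 ≤ f u) ∧
  (∀ v, f v = 0 → ∃ u, G.Adj v u ∧ f u = 0)

/-- The restrained double Roman domination number. -/
noncomputable def rdrNum {V : Type*} [Fintype V] (G : SimpleGraph V) : ℕ :=
  sInf {k | ∃ f : V → ℕ, IsRDRD G f ∧ ∑ v, f v = k}

def IsDomSet {V : Type*} (G : SimpleGraph V) (S : Set V) : Prop :=
  ∀ v ∉ S, ∃ u ∈ S, G.Adj v u

def IsRDomSet {V : Type*} (G : SimpleGraph V) (S : Set V) : Prop :=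
  IsDomSet G S ∧ ∀ v ∉ S, ∃ u ∉ S, G.Adj v u

def IsR2DomSet {V : Type*} (G : SimpleGraph V) (S : Set V) : Prop :=
  (∀ v ∉ S, ∃ u w, u ∈ S ∧ w ∈ S ∧ u ≠ w ∧ G.Adj v u ∧ G.Adj v w) ∧
  ∀ v ∉ S, ∃ u ∉ S, G.Adj v u

noncomputable def domNum {V : Type*} [Fintype V] (G : SimpleGraph V) : ℕ :=
  sInf {k | ∃ S : Finset V, IsDomSet G ↑S ∧ S.card = k}

noncomputable def rDomNum {V : Type*} [Fintype V] (G : SimpleGraph V) : ℕ :=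
  sInf {k | ∃ S : Finset V, IsRDomSet G ↑S ∧ S.card = k}

noncomputable def r2DomNum {V : Type*} [Fintype V] (G : SimpleGraph V) : ℕ :=
  sInf {k | ∃ S : Finset V, IsR2DomSet G ↑S ∧ S.card = k}

/-- A restrained Roman dominating function. -/
def IsRRD {V : Type*} (G : SimpleGraph V) (f : V → ℕ) : Prop :=
  (∀ v, f v ≤ 2) ∧
  (∀ v, f v = 0 → ∃ u, G.Adj v u ∧ f u = 2) ∧
  (∀ v, f v = 0 → ∃ u, G.Adj v u ∧ f u = 0)

noncomputable def rrNum {V : Type*} [Fintype V] (G : SimpleGraph V) : ℕ :=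
  sInf {k | ∃ f : V → ℕ, IsRRD G f ∧ ∑ v, f v = k}

/-- A star: all edges are incident to one common vertex. -/
def IsStar {V : Type*} (G : SimpleGraph V) : Prop :=
  ∃ x : V, ∀ ⦃a b : V⦄, G.Adj a b → a = x ∨ b = x

/-- The join of two graphs. -/
def joinG {α β : Type*} (G : SimpleGraph α) (H : SimpleGraph β) : SimpleGraph (α ⊕ β) :=
  SimpleGraph.fromRel (fun x y => match x, y with
    | Sum.inl a, Sum.inl b => G.Adj a b
    | Sum.inr a, Sum.inr b => H.Adj a b
    | Sum.inl _, Sum.inr _ => True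
    | Sum.inr _, Sum.inl _ => True)

/-- The disjoint union of two graphs. -/
def dUnion {α β : Type*} (G : SimpleGraph α) (H : SimpleGraph β) : SimpleGraph (α ⊕ β) :=
  SimpleGraph.fromRel (fun x y => match x, y with
    | Sum.inl a, Sum.inl b => G.Adj a b
    | Sum.inr a, Sum.inr b => H.Adj a b
    | _, _ => False)

open SimpleGraph

namespace RDRDaux

variable {V : Type*} {G : SimpleGraph V}

noncomputable def thePath (hT : G.IsTree) (r v : V) : G.Walk v r :=
  (hT.existsUnique_path v r).choose

lemma thePath_isPath (hT : G.IsTree) (r v : V) : (thePath hT r v).IsPath :=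
  (hT.existsUnique_path v r).choose_spec.1

lemma thePath_unique (hT : G.IsTree) {r v : V} (q : G.Walk v r) (hq : q.IsPath) :
    q = thePath hT r v :=
  (hT.existsUnique_path v r).choose_spec.2 q hq

noncomputable def lev (hT : G.IsTree) (r v : V) : ℕ := (thePath hT r v).length

lemma lev_root (hT : G.IsTree) (r : V) : lev hT r r = 0 := by
  have h := thePath_unique hT (SimpleGraph.Walk.nil : G.Walk r r) SimpleGraph.Walk.IsPath.nil
  simp [lev, ← h]

lemma lev_lt_of_mem (hT : G.IsTree) {r u v : V} (h : v ∈ (thePath hT r u).support)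
    (hne : v ≠ u) : lev hT r v < lev hT r u := by
  classical
  have hsp := SimpleGraph.Walk.take_spec (thePath hT r u) h
  have hdr : ((thePath hT r u).dropUntil v h).IsPath := (thePath_isPath hT r u).dropUntil h
  have hd := thePath_unique hT _ hdr
  have hlen : ((thePath hT r u).takeUntil v h).length
      + ((thePath hT r u).dropUntil v h).length = (thePath hT r u).length := by
    rw [← SimpleGraph.Walk.length_append, hsp]
  have ht0 : ((thePath hT r u).takeUntil v h).length ≠ 0 := by
    intro h0
    exact hne (SimpleGraph.Walk.eq_of_length_eq_zero h0).symm
  have h1 : lev hT r v = ((thePath hT r u).dropUntil v h).length := by rw [lev, ← hd]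
  have h2 : lev hT r u = (thePath hT r u).length := rfl
  omega

lemma cons_eq_thePath (hT : G.IsTree) {r u v : V} (h : G.Adj v u)
    (hlt : lev hT r u < lev hT r v) :
    SimpleGraph.Walk.cons h (thePath hT r u) = thePath hT r v := by
  apply thePath_unique hT
  rw [SimpleGraph.Walk.cons_isPath_iff]
  refine ⟨thePath_isPath hT r u, fun hmem => ?_⟩
  rcases eq_or_ne v u with rfl | hne
  · exact G.irrefl h
  · exact absurd (lev_lt_of_mem hT hmem hne) (by omega)

lemma adj_lev_ne (hT : G.IsTree) {r u v : V} (h : G.Adj u v) :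
    lev hT r u ≠ lev hT r v := by
  intro heq
  by_cases hmem : v ∈ (thePath hT r u).support
  · exact absurd (lev_lt_of_mem hT hmem h.ne') (by omega)
  · have hp : (SimpleGraph.Walk.cons h.symm (thePath hT r u)).IsPath := by
      rw [SimpleGraph.Walk.cons_isPath_iff]
      exact ⟨thePath_isPath hT r u, hmem⟩
    have := thePath_unique hT _ hp
    have : lev hT r v = lev hT r u + 1 := by
      rw [lev, ← this, SimpleGraph.Walk.length_cons, lev]
    omega

noncomputable def par (hT : G.IsTree) (r v : V) : V := (thePath hT r v).getVert 1

lemma par_spec (hT : G.IsTree) {r v : V} (hv : v ≠ r) :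
    G.Adj v (par hT r v) ∧ lev hT r (par hT r v) + 1 = lev hT r v := by
  have hnn : ¬(thePath hT r v).Nil := by
    intro hnil
    exact hv (SimpleGraph.Walk.eq_of_length_eq_zero
      (SimpleGraph.Walk.nil_iff_length_eq.mp hnil))
  obtain ⟨u, ha, q, he⟩ := SimpleGraph.Walk.not_nil_iff.mp hnn
  have hq : q.IsPath := by
    have := thePath_isPath hT r v
    rw [he] at this
    exact this.of_cons
  have hqu : q = thePath hT r u := thePath_unique hT q hq
  have hpar : par hT r v = u := by
    rw [par, he, SimpleGraph.Walk.getVert_cons_succ, SimpleGraph.Walk.getVert_zero]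
  rw [hpar]
  constructor
  · exact ha
  · rw [lev, lev, he, SimpleGraph.Walk.length_cons, hqu]

lemma par_unique (hT : G.IsTree) {r u v : V} (h : G.Adj v u)
    (hlt : lev hT r u < lev hT r v) : u = par hT r v := by
  have hc := cons_eq_thePath hT h hlt
  rw [par, ← hc, SimpleGraph.Walk.getVert_cons_succ, SimpleGraph.Walk.getVert_zero]

lemma ne_root_of_lev_pos (hT : G.IsTree) {r v : V} (h : 0 < lev hT r v) : v ≠ r := by
  intro rfl'
  rw [rfl', lev_root] at h
  omega

lemma adj_par (hT : G.IsTree) (r : V) {u v : V} (h : G.Adj u v) :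
    (v ≠ r ∧ u = par hT r v) ∨ (u ≠ r ∧ v = par hT r u) := by
  rcases lt_or_gt_of_ne (adj_lev_ne hT h (r := r)) with hlt | hgt
  · exact Or.inl ⟨ne_root_of_lev_pos hT (by omega), par_unique hT h.symm hlt⟩
  · exact Or.inr ⟨ne_root_of_lev_pos hT (by omega), par_unique hT h hgt⟩

lemma par_lev_lt (hT : G.IsTree) {r v : V} (hv : v ≠ r) :
    lev hT r (par hT r v) < lev hT r v := by
  have := (par_spec hT hv).2; omega

lemma par_root (hT : G.IsTree) (r : V) : par hT r r = r := by
  rw [par]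
  apply SimpleGraph.Walk.getVert_of_length_le
  have : lev hT r r = 0 := lev_root hT r
  rw [lev] at this
  omega

end RDRDaux


lemma RDRDaux.tri {V : Type*} {G : SimpleGraph V} {a b x : V} (hab : G.Adj a b) (hbx : G.Adj b x)
    (hxa : G.Adj x a) (hax : a ≠ x) (hbxne : b ≠ x) :
    (Walk.cons hab (Walk.cons hbx (Walk.cons hxa Walk.nil))).IsCycle := by
  rw [SimpleGraph.Walk.isCycle_def]
  refine ⟨?_, by simp, ?_⟩
  · rw [SimpleGraph.Walk.isTrail_def]
    simp [Sym2.eq_iff]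
    have := hab.ne
    tauto
  · simp only [Walk.support_cons, Walk.support_nil, List.tail_cons, List.nodup_cons,
      List.mem_cons, List.mem_singleton, List.not_mem_nil, or_false, List.nodup_nil, and_true]
    refine ⟨?_, ?_⟩
    · rintro (h | h)
      · exact hbxne h
      · exact hab.ne' h
    · simpa using fun h => hax h.symm

open RDRDaux in
lemma key_lb {V : Type*} [Fintype V] {G : SimpleGraph V} (hT : G.IsTree)
    (hn : 2 ≤ Fintype.card V) {f : V → ℕ} (hf : IsRDRD G f) :
    Fintype.card V + 1 ≤ (∑ v, f v) ∧ ((∑ v, f v) = Fintype.card V + 1 → IsStar G) := by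
  classical
  letI : DecidableEq V := Classical.decEq V
  obtain ⟨hb, hcond0, hcond1, hcondR⟩ := hf
  by_cases hz : ∃ v, f v = 0
  · -- zero case : show card + 2 ≤ sum
    obtain ⟨z₀, hz₀⟩ := hz
    set r := z₀ with hr
    -- partition
    set A : Finset V := univ.filter (fun v => f v = 0) with hA
    set B : Finset V := univ.filter (fun v => f v = 1) with hB
    set C : Finset V := univ.filter (fun v => f v = 2) with hC
    set D : Finset V := univ.filter (fun v => f v = 3) with hD
    have hUn : (univ : Finset V) = ((A ∪ B) ∪ C) ∪ D := by
      ext v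
      have := hb v
      simp only [hA, hB, hC, hD, mem_union, mem_filter, mem_univ, true_and, true_iff]
      omega
    have hdAB : Disjoint A B := by
      rw [Finset.disjoint_left]; intro v hv hv'
      simp only [hA, hB, mem_filter, mem_univ, true_and] at hv hv'; omega
    have hdABC : Disjoint (A ∪ B) C := by
      rw [Finset.disjoint_left]; intro v hv hv'
      simp only [hA, hB, hC, mem_union, mem_filter, mem_univ, true_and] at hv hv'; omega
    have hdABCD : Disjoint ((A ∪ B) ∪ C) D := by
      rw [Finset.disjoint_left]; intro v hv hv'
      simp only [hA, hB, hC, hD, mem_union, mem_filter, mem_univ, true_and] at hv hv'; omega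
    have hcardV : Fintype.card V = A.card + B.card + C.card + D.card := by
      rw [← card_univ, hUn, card_union_of_disjoint hdABCD, card_union_of_disjoint hdABC,
        card_union_of_disjoint hdAB]
    have hsumf : ∑ v, f v = B.card + 2 * C.card + 3 * D.card := by
      rw [hUn, sum_union hdABCD, sum_union hdABC, sum_union hdAB]
      have h0 : ∑ v ∈ A, f v = 0 := by
        apply sum_eq_zero; intro v hv
        simp only [hA, mem_filter] at hv; exact hv.2
      have h1 : ∑ v ∈ B, f v = B.card := by
        rw [sum_eq_card_nsmul (fun v hv => by simp only [hB, mem_filter] at hv; exact hv.2)]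
        simp
      have h2 : ∑ v ∈ C, f v = 2 * C.card := by
        rw [sum_eq_card_nsmul (fun v hv => by simp only [hC, mem_filter] at hv; exact hv.2)]
        rw [smul_eq_mul]; ring
      have h3 : ∑ v ∈ D, f v = 3 * D.card := by
        rw [sum_eq_card_nsmul (fun v hv => by simp only [hD, mem_filter] at hv; exact hv.2)]
        rw [smul_eq_mul]; ring
      rw [h0, h1, h2, h3]; ring
    -- A3 / A2
    set A3 : Finset V := A.filter (fun z => ∃ u, G.Adj z u ∧ f u = 3) with hA3
    set A2 : Finset V := A \ A3 with hA2
    have hA3sub : A3 ⊆ A := filter_subset _ _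
    have hcardA : A2.card + A3.card = A.card := card_sdiff_add_card_eq_card hA3sub
    -- choice functions
    have hwex : ∀ z, ∃ u, f z = 0 → G.Adj z u ∧ f u = 0 := by
      intro z
      by_cases h : f z = 0
      · obtain ⟨u, hu⟩ := hcondR z h; exact ⟨u, fun _ => hu⟩
      · exact ⟨z, fun h' => absurd h' h⟩
    choose w hw using hwex
    have hu3ex : ∀ z, ∃ u, z ∈ A3 → G.Adj z u ∧ f u = 3 := by
      intro z
      by_cases h : z ∈ A3
      · simp only [hA3, mem_filter] at h
        obtain ⟨u, hu⟩ := h.2; exact ⟨u, fun _ => hu⟩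
      · exact ⟨z, fun h' => absurd h' h⟩
    choose u3 hu3 using hu3ex
    have hq2ex : ∀ z, ∃ q : V × V, z ∈ A2 →
        G.Adj z q.1 ∧ G.Adj z q.2 ∧ q.1 ≠ q.2 ∧ f q.1 = 2 ∧ f q.2 = 2 := by
      intro z
      by_cases h : z ∈ A2
      · have hzA : z ∈ A := (mem_sdiff.mp h).1
        have hz0 : f z = 0 := by simpa [hA] using hzA
        have hno3 : ¬∃ u, G.Adj z u ∧ f u = 3 := by
          have := (mem_sdiff.mp h).2
          simpa [hA3, hzA] using this
        rcases hcond0 z hz0 with h3 | ⟨u, w', h1, h2, h3, h4, h5⟩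
        · exact absurd h3 hno3
        · exact ⟨(u, w'), fun _ => ⟨h1, h2, h3, h4, h5⟩⟩
      · exact ⟨(z, z), fun h' => absurd h' h⟩
    choose q2 hq2 using hq2ex
    -- the edge-vertex map
    set ev : V → V → V := fun z u => if par hT r z = u then z else u with hev
    have hevspec : ∀ z u, G.Adj z u →
        (ev z u ≠ r ∧ ((ev z u = z ∧ par hT r z = u) ∨ (ev z u = u ∧ par hT r u = z))) := by
      intro z u hzu
      rcases adj_par hT r hzu with ⟨hur, hpu⟩ | ⟨hzr, hpz⟩
      · -- u ≠ r, z = par hT r u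
        have hne : par hT r z ≠ u := by
          intro hcon
          by_cases hzzr : z = r
          · rw [hzzr] at hcon
            rw [par_root] at hcon
            exact hur hcon.symm
          · have l1 := par_lev_lt hT (r := r) hzzr
            have l2 := par_lev_lt hT (r := r) hur
            rw [hcon] at l1
            rw [← hpu] at l2
            omega
        refine ⟨?_, Or.inr ⟨by simp [hev, hne], hpu.symm⟩⟩
        simp only [hev, if_neg hne]
        exact hur
      · -- z ≠ r, u = par hT r z
        refine ⟨?_, Or.inl ⟨by simp [hev, hpz.symm], hpz.symm⟩⟩
        simp only [hev, if_pos hpz.symm]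
        exact hzr
    -- S sets
    set S00 : Finset V := univ.filter (fun v => v ≠ r ∧ f v = 0 ∧ f (par hT r v) = 0) with hS00
    set S03 : Finset V := univ.filter
      (fun v => v ≠ r ∧ ((f v = 0 ∧ f (par hT r v) = 3) ∨ (f v = 3 ∧ f (par hT r v) = 0))) with hS03
    set S02 : Finset V := univ.filter
      (fun v => v ≠ r ∧ ((f v = 0 ∧ f (par hT r v) = 2) ∨ (f v = 2 ∧ f (par hT r v) = 0))) with hS02
    -- (I) : A.card ≤ 2 * S00.card
    have hI : A.card ≤ 2 * S00.card := by
      have hmaps : ∀ z ∈ A, ev z (w z) ∈ S00 := by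
        intro z hzA
        have hz0 : f z = 0 := by simpa [hA] using hzA
        obtain ⟨hadj, hw0⟩ := hw z hz0
        obtain ⟨hner, hcase⟩ := hevspec z (w z) hadj
        rcases hcase with ⟨he, hpz⟩ | ⟨he, hpw⟩
        · simp only [hS00, mem_filter, mem_univ, true_and] at hner ⊢
          rw [he]
          rw [he] at hner
          exact ⟨hner, hz0, by rw [hpz]; exact hw0⟩
        · simp only [hS00, mem_filter, mem_univ, true_and] at hner ⊢
          rw [he]
          rw [he] at hner
          exact ⟨hner, hw0, by rw [hpw]; exact hz0⟩
      apply card_le_mul_card_image_of_maps_to hmaps 2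
      intro b hb'
      have hsub : (A.filter (fun z => ev z (w z) = b)) ⊆ {b, par hT r b} := by
        intro z hz'
        obtain ⟨hzA, hzb⟩ := mem_filter.mp hz'
        have hz0 : f z = 0 := by simpa [hA] using hzA
        obtain ⟨hadj, _⟩ := hw z hz0
        obtain ⟨_, hcase⟩ := hevspec z (w z) hadj
        rcases hcase with ⟨he, _⟩ | ⟨he, hpw⟩
        · simp [← hzb, he]
        · have : z = par hT r b := by rw [← hzb, he, hpw]
          simp [this]
      calc (A.filter (fun z => ev z (w z) = b)).card
          ≤ ({b, par hT r b} : Finset V).card := card_le_card hsub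
        _ ≤ 2 := (card_insert_le _ _).trans (by simp)
    -- (II) : A3.card ≤ S03.card
    have hII : A3.card ≤ S03.card := by
      have hmaps : ∀ z ∈ A3, ev z (u3 z) ∈ S03 := by
        intro z hzA
        have hz0 : f z = 0 := by
          have := hA3sub hzA; simpa [hA] using this
        obtain ⟨hadj, h3⟩ := hu3 z hzA
        obtain ⟨hner, hcase⟩ := hevspec z (u3 z) hadj
        rcases hcase with ⟨he, hpz⟩ | ⟨he, hpu⟩
        · simp only [hS03, mem_filter, mem_univ, true_and]
          rw [he]; rw [he] at hner
          exact ⟨hner, Or.inl ⟨hz0, by rw [hpz]; exact h3⟩⟩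
        · simp only [hS03, mem_filter, mem_univ, true_and]
          rw [he]; rw [he] at hner
          exact ⟨hner, Or.inr ⟨h3, by rw [hpu]; exact hz0⟩⟩
      have hrec : ∀ z ∈ A3, (if f (ev z (u3 z)) = 0 then ev z (u3 z) else par hT r (ev z (u3 z))) = z := by
        intro z hzA
        have hz0 : f z = 0 := by
          have := hA3sub hzA; simpa [hA] using this
        obtain ⟨hadj, h3⟩ := hu3 z hzA
        obtain ⟨_, hcase⟩ := hevspec z (u3 z) hadj
        rcases hcase with ⟨he, _⟩ | ⟨he, hpu⟩
        · rw [he, if_pos hz0]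
        · rw [he, if_neg (by omega), hpu]
      apply card_le_card_of_injOn _ hmaps
      intro z hz' z' hz'' heq
      have heq' : ev z (u3 z) = ev z' (u3 z') := heq
      rw [← hrec z hz', ← hrec z' hz'', heq']
    -- (III) : 2 * A2.card ≤ S02.card
    have hIII : 2 * A2.card ≤ S02.card := by
      set e : V → Finset V := fun z => {ev z (q2 z).1, ev z (q2 z).2} with he'
      have hmaps : ∀ z ∈ A2, ∀ b ∈ e z, b ∈ S02 := by
        intro z hzA b hbe
        have hz0 : f z = 0 := by
          have := (mem_sdiff.mp hzA).1; simpa [hA] using this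
        obtain ⟨ha1, ha2, hne12, hf1, hf2⟩ := hq2 z hzA
        simp only [he', mem_insert, mem_singleton] at hbe
        rcases hbe with rfl | rfl
        · obtain ⟨hner, hcase⟩ := hevspec z (q2 z).1 ha1
          simp only [hS02, mem_filter, mem_univ, true_and]
          rcases hcase with ⟨he, hpz⟩ | ⟨he, hpu⟩
          · rw [he]; rw [he] at hner
            exact ⟨hner, Or.inl ⟨hz0, by rw [hpz]; exact hf1⟩⟩
          · rw [he]; rw [he] at hner
            exact ⟨hner, Or.inr ⟨hf1, by rw [hpu]; exact hz0⟩⟩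
        · obtain ⟨hner, hcase⟩ := hevspec z (q2 z).2 ha2
          simp only [hS02, mem_filter, mem_univ, true_and]
          rcases hcase with ⟨he, hpz⟩ | ⟨he, hpu⟩
          · rw [he]; rw [he] at hner
            exact ⟨hner, Or.inl ⟨hz0, by rw [hpz]; exact hf2⟩⟩
          · rw [he]; rw [he] at hner
            exact ⟨hner, Or.inr ⟨hf2, by rw [hpu]; exact hz0⟩⟩
      have hrec : ∀ z ∈ A2, ∀ b ∈ e z, (if f b = 0 then b else par hT r b) = z := by
        intro z hzA b hbe
        have hz0 : f z = 0 := by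
          have := (mem_sdiff.mp hzA).1; simpa [hA] using this
        obtain ⟨ha1, ha2, hne12, hf1, hf2⟩ := hq2 z hzA
        simp only [he', mem_insert, mem_singleton] at hbe
        rcases hbe with rfl | rfl
        · obtain ⟨_, hcase⟩ := hevspec z (q2 z).1 ha1
          rcases hcase with ⟨he, _⟩ | ⟨he, hpu⟩
          · rw [he, if_pos hz0]
          · rw [he, if_neg (by omega), hpu]
        · obtain ⟨_, hcase⟩ := hevspec z (q2 z).2 ha2
          rcases hcase with ⟨he, _⟩ | ⟨he, hpu⟩
          · rw [he, if_pos hz0]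
          · rw [he, if_neg (by omega), hpu]
      have hdisj : ∀ z ∈ A2, ∀ z' ∈ A2, z ≠ z' → Disjoint (e z) (e z') := by
        intro z hz' z' hz'' hne
        rw [Finset.disjoint_left]
        intro b hb1 hb2
        exact hne (by rw [← hrec z hz' b hb1, ← hrec z' hz'' b hb2])
      have hc2 : ∀ z ∈ A2, (e z).card = 2 := by
        intro z hzA
        have hz0 : f z = 0 := by
          have := (mem_sdiff.mp hzA).1; simpa [hA] using this
        obtain ⟨ha1, ha2, hne12, hf1, hf2⟩ := hq2 z hzA
        have hne' : ev z (q2 z).1 ≠ ev z (q2 z).2 := by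
          obtain ⟨_, hcase1⟩ := hevspec z (q2 z).1 ha1
          obtain ⟨_, hcase2⟩ := hevspec z (q2 z).2 ha2
          rcases hcase1 with ⟨he1, hp1⟩ | ⟨he1, hp1⟩ <;>
            rcases hcase2 with ⟨he2, hp2⟩ | ⟨he2, hp2⟩ <;> rw [he1, he2] <;> intro hcc
          · exact hne12 (by rw [← hp1, ← hp2])
          · exact ha2.ne hcc
          · exact ha1.ne hcc.symm
          · exact hne12 hcc
        rw [he']
        rw [card_insert_of_notMem (by simpa using hne'), card_singleton]
      have hbig : (A2.biUnion e).card = 2 * A2.card := by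
        rw [card_biUnion hdisj]
        rw [sum_congr rfl hc2]
        simp [mul_comm]
      have hsub : A2.biUnion e ⊆ S02 := by
        intro b hb'
        obtain ⟨z, hz', hbz⟩ := mem_biUnion.mp hb'
        exact hmaps z hz' b hbz
      calc 2 * A2.card = (A2.biUnion e).card := hbig.symm
        _ ≤ S02.card := card_le_card hsub
    -- (IV)
    have hz₀A : z₀ ∈ A := by simp [hA, ← hr, hz₀]
    have hdisjAD : Disjoint A D := by
      rw [Finset.disjoint_left]; intro v hv hv'
      simp only [hA, hD, mem_filter, mem_univ, true_and] at hv hv'; omega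
    have hdisjAC : Disjoint A C := by
      rw [Finset.disjoint_left]; intro v hv hv'
      simp only [hA, hC, mem_filter, mem_univ, true_and] at hv hv'; omega
    have hdisjCD : Disjoint C D := by
      rw [Finset.disjoint_left]; intro v hv hv'
      simp only [hC, hD, mem_filter, mem_univ, true_and] at hv hv'; omega
    have hIV : S00.card + S03.card + 1 ≤ A.card + D.card := by
      obtain ⟨m, hm, hmmin⟩ := exists_min_image (A ∪ D) (lev hT r) ⟨z₀, mem_union_left _ hz₀A⟩
      have hsub : S00 ∪ S03 ⊆ (A ∪ D).erase m := by
        intro v hv'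
        have hv2 : v ≠ r ∧ v ∈ A ∪ D ∧ par hT r v ∈ A ∪ D := by
          rcases mem_union.mp hv' with h' | h'
          · simp only [hS00, mem_filter, mem_univ, true_and] at h'
            refine ⟨h'.1, ?_, ?_⟩ <;> simp [hA, hD, mem_union, h'.2.1, h'.2.2]
          · simp only [hS03, mem_filter, mem_univ, true_and] at h'
            obtain ⟨h1, h2⟩ := h'
            rcases h2 with ⟨ha', hb'⟩ | ⟨ha', hb'⟩ <;>
              refine ⟨h1, ?_, ?_⟩ <;> simp [hA, hD, mem_union, ha', hb']
        obtain ⟨hvr, hvAD, hpAD⟩ := hv2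
        rw [mem_erase]
        refine ⟨?_, hvAD⟩
        intro hvm
        have l1 := par_lev_lt hT (r := r) hvr
        have l2 := hmmin (par hT r v) hpAD
        rw [← hvm] at l2
        omega
      have hdisj' : Disjoint S00 S03 := by
        rw [Finset.disjoint_left]; intro v hv1 hv2
        simp only [hS00, hS03, mem_filter, mem_univ, true_and] at hv1 hv2
        omega
      have h1 : (S00 ∪ S03).card = S00.card + S03.card := card_union_of_disjoint hdisj'
      have h2 : ((A ∪ D).erase m).card + 1 = (A ∪ D).card :=
        card_erase_add_one hm
      have h3 : (A ∪ D).card = A.card + D.card := card_union_of_disjoint hdisjAD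
      have h4 : (S00 ∪ S03).card ≤ ((A ∪ D).erase m).card := card_le_card hsub
      omega
    -- (V)
    have hV : S00.card + S03.card + S02.card + 1 ≤ A.card + C.card + D.card := by
      obtain ⟨m, hm, hmmin⟩ := exists_min_image ((A ∪ C) ∪ D) (lev hT r)
        ⟨z₀, mem_union_left _ (mem_union_left _ hz₀A)⟩
      have hsub : (S00 ∪ S03) ∪ S02 ⊆ ((A ∪ C) ∪ D).erase m := by
        intro v hv'
        have hv2 : v ≠ r ∧ v ∈ (A ∪ C) ∪ D ∧ par hT r v ∈ (A ∪ C) ∪ D := by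
          rcases mem_union.mp hv' with h' | h'
          · rcases mem_union.mp h' with h'' | h''
            · simp only [hS00, mem_filter, mem_univ, true_and] at h''
              refine ⟨h''.1, ?_, ?_⟩ <;>
                simp [hA, hC, hD, mem_union, h''.2.1, h''.2.2]
            · simp only [hS03, mem_filter, mem_univ, true_and] at h''
              obtain ⟨h1, h2⟩ := h''
              rcases h2 with ⟨ha', hb'⟩ | ⟨ha', hb'⟩ <;>
                refine ⟨h1, ?_, ?_⟩ <;> simp [hA, hC, hD, mem_union, ha', hb']
          · simp only [hS02, mem_filter, mem_univ, true_and] at h'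
            obtain ⟨h1, h2⟩ := h'
            rcases h2 with ⟨ha', hb'⟩ | ⟨ha', hb'⟩ <;>
              refine ⟨h1, ?_, ?_⟩ <;> simp [hA, hC, hD, mem_union, ha', hb']
        obtain ⟨hvr, hvAD, hpAD⟩ := hv2
        rw [mem_erase]
        refine ⟨?_, hvAD⟩
        intro hvm
        have l1 := par_lev_lt hT (r := r) hvr
        have l2 := hmmin (par hT r v) hpAD
        rw [← hvm] at l2
        omega
      have hd1 : Disjoint S00 S03 := by
        rw [Finset.disjoint_left]; intro v hv1 hv2
        simp only [hS00, hS03, mem_filter, mem_univ, true_and] at hv1 hv2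
        omega
      have hd2 : Disjoint (S00 ∪ S03) S02 := by
        rw [Finset.disjoint_left]; intro v hv1 hv2
        simp only [hS00, hS03, hS02, mem_union, mem_filter, mem_univ, true_and] at hv1 hv2
        omega
      have h1 : ((S00 ∪ S03) ∪ S02).card = S00.card + S03.card + S02.card := by
        rw [card_union_of_disjoint hd2, card_union_of_disjoint hd1]
      have h2 : (((A ∪ C) ∪ D).erase m).card + 1 = ((A ∪ C) ∪ D).card :=
        card_erase_add_one hm
      have h3 : ((A ∪ C) ∪ D).card = A.card + C.card + D.card := by
        rw [card_union_of_disjoint, card_union_of_disjoint hdisjAC]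
        exact disjoint_union_left.mpr ⟨hdisjAD, hdisjCD⟩
      have h4 : ((S00 ∪ S03) ∪ S02).card ≤ (((A ∪ C) ∪ D).erase m).card := card_le_card hsub
      omega
    have hA1 : 1 ≤ A.card := card_pos.mpr ⟨z₀, hz₀A⟩
    have hfinal : Fintype.card V + 2 ≤ (∑ v, f v) := by omega
    constructor
    · omega
    · intro heq
      exact absurd heq (by omega)
  · -- no-zero case
    push_neg at hz
    have h1 : ∀ v, 1 ≤ f v := fun v => Nat.one_le_iff_ne_zero.mpr (hz v)
    have hne : Nonempty V := Fintype.card_pos_iff.mp (by omega)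
    have base : ∀ s : Finset V, s.card ≤ ∑ v ∈ s, f v := by
      intro s
      calc s.card = s.card • 1 := by simp
        _ ≤ ∑ v ∈ s, f v := card_nsmul_le_sum s f 1 (fun v _ => h1 v)
    have hex : ∃ x, 2 ≤ f x := by
      by_contra hno
      push_neg at hno
      obtain ⟨v⟩ := hne
      have hv1 : f v = 1 := by have := h1 v; have := hno v; omega
      obtain ⟨u, _, hu2⟩ := hcond1 v hv1
      have := hno u; omega
    obtain ⟨x, hx⟩ := hex
    have hsplit : ∀ y : V, f y + ∑ v ∈ univ.erase y, f v = ∑ v, f v := fun y =>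
      add_sum_erase univ f (mem_univ y)
    have herase : ∀ y : V, (univ.erase y).card = Fintype.card V - 1 := fun y => by
      rw [card_erase_of_mem (mem_univ y), card_univ]
    have hlb : Fintype.card V + 1 ≤ ∑ v, f v := by
      have := hsplit x
      have := base (univ.erase x)
      have := herase x
      omega
    refine ⟨hlb, fun heq => ?_⟩
    -- equality : star
    have hall : ∀ y, y ≠ x → f y = 1 := by
      intro y hy
      by_contra hne1
      have hy2 : 2 ≤ f y := by have := h1 y; omega
      have hyx : y ∈ univ.erase x := mem_erase.mpr ⟨hy, mem_univ y⟩
      have hs2 : f y + ∑ v ∈ (univ.erase x).erase y, f v = ∑ v ∈ univ.erase x, f v :=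
        add_sum_erase _ f hyx
      have hb2 := base ((univ.erase x).erase y)
      have hc2 : ((univ.erase x).erase y).card = Fintype.card V - 2 := by
        rw [card_erase_of_mem hyx, herase x]
        omega
      have := hsplit x
      omega
    refine ⟨x, ?_⟩
    intro a b hab
    by_contra hcon
    push_neg at hcon
    obtain ⟨hax, hbx⟩ := hcon
    have hadjx : ∀ c : V, c ≠ x → G.Adj c x := by
      intro c hc
      obtain ⟨u, hcu, hu2⟩ := hcond1 c (hall c hc)
      have hux : u = x := by
        by_contra h'
        have := hall u h'; omega
      rwa [hux] at hcu
    have hax' := hadjx a hax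
    have hbx' := hadjx b hbx
    have hcyc := RDRDaux.tri hab hbx' hax'.symm hax hbx
    exact hT.IsAcyclic _ hcyc

lemma star_exists {V : Type*} [Fintype V] {G : SimpleGraph V} (hT : G.IsTree)
    (hs : IsStar G) :
    ∃ f : V → ℕ, IsRDRD G f ∧ (∑ v, f v) = Fintype.card V + 1 := by
  classical
  obtain ⟨x, hx⟩ := hs
  have hadj : ∀ v : V, v ≠ x → G.Adj v x := by
    intro v hv
    obtain ⟨p⟩ := (hT.isConnected v x)
    have hnn : ¬p.Nil := by
      intro hnil
      exact hv (SimpleGraph.Walk.eq_of_length_eq_zero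
        (SimpleGraph.Walk.nil_iff_length_eq.mp hnil))
    obtain ⟨u, ha, q, he⟩ := SimpleGraph.Walk.not_nil_iff.mp hnn
    rcases hx ha with h' | h'
    · exact absurd h' hv
    · rwa [h'] at ha
  refine ⟨fun v => if v = x then 2 else 1, ⟨?_, ?_, ?_, ?_⟩, ?_⟩
  · intro v; dsimp only; split <;> omega
  · intro v hv; dsimp only at hv; split at hv <;> omega
  · intro v hv
    dsimp only at hv
    have hvx : v ≠ x := by intro h; rw [if_pos h] at hv; omega
    exact ⟨x, hadj v hvx, by simp⟩
  · intro v hv; dsimp only at hv; split at hv <;> omega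
  · have : (fun v => if v = x then 2 else 1) = fun v : V => 1 + if v = x then 1 else 0 := by
      funext v; split <;> omega
    rw [this]
    rw [Finset.sum_add_distrib]
    simp [Finset.card_univ]

lemma const3_rdrd {V : Type*} (G : SimpleGraph V) : IsRDRD G (fun _ => 3) :=
  ⟨fun _ => le_refl 3, fun v hv => by simp at hv, fun v hv => by simp at hv,
    fun v hv => by simp at hv⟩


theorem stmt_13 {V : Type*} [Fintype V] (G : SimpleGraph V) (hT : G.IsTree)
    (hn : 2 ≤ Fintype.card V) :
    Fintype.card V + 1 ≤ rdrNum G ∧ (rdrNum G = Fintype.card V + 1 ↔ IsStar G) := by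
  classical
  have hSne : {k | ∃ f : V → ℕ, IsRDRD G f ∧ ∑ v, f v = k}.Nonempty :=
    ⟨∑ v : V, 3, fun _ => 3, const3_rdrd G, rfl⟩
  have hmem : rdrNum G ∈ {k | ∃ f : V → ℕ, IsRDRD G f ∧ ∑ v, f v = k} :=
    Nat.sInf_mem hSne
  obtain ⟨f, hf, hsum⟩ := hmem
  have hkey := key_lb hT hn hf
  have hlb : Fintype.card V + 1 ≤ rdrNum G := by
    rw [← hsum]; exact hkey.1
  refine ⟨hlb, ⟨?_, ?_⟩⟩
  · intro heq
    exact hkey.2 (by rw [hsum, heq])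
  · intro hstar
    obtain ⟨g, hg, hgsum⟩ := star_exists hT hstar
    have hub : rdrNum G ≤ Fintype.card V + 1 := by
      rw [← hgsum]
      exact Nat.sInf_le ⟨g, hg, rfl⟩
    omega
end

section
/- For any tree T, γ_rdR(T) = γ(T) + γ_r(T) if and only if T is a star. -/
open Finset

namespace RDRDAux

variable {V : Type*} {G : SimpleGraph V}

lemma walk_closure {P : V → Prop}
    (hstep : ∀ u w, G.Adj u w → P u → P w) {u t : V} (p : G.Walk u t) (hu : P u) : P t := by
  induction p with
  | nil => exact hu
  | cons h q ih => exact ih (hstep _ _ h hu)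

lemma reach_closure (hconn : G.Connected) {P : V → Prop}
    (hstep : ∀ u w, G.Adj u w → P u → P w) (u : V) (hu : P u) (t : V) : P t := by
  obtain ⟨p⟩ := hconn.preconnected u t
  exact walk_closure hstep p hu

lemma exists_adj (hconn : G.Connected) {v w : V} (hvw : v ≠ w) : ∃ u, G.Adj v u := by
  obtain ⟨p⟩ := hconn.preconnected v w
  cases p with
  | nil => exact absurd rfl hvw
  | cons h q => exact ⟨_, h⟩

lemma star_aux (hconn : G.Connected)
    (hNS : ∀ b c, G.Adj b c → (∀ a, G.Adj b a → a = c) ∨ (∀ d, G.Adj c d → d = b))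
    {u v : V} (huv : G.Adj u v) (hu : ∀ a, G.Adj u a → a = v) : IsStar G := by
  by_cases hAll : ∀ w, G.Adj v w → ∀ a, G.Adj w a → a = v
  · refine ⟨v, ?_⟩
    have hP : ∀ t, t = v ∨ (∀ a, G.Adj t a → a = v) := by
      intro t
      refine reach_closure hconn (P := fun t => t = v ∨ (∀ a, G.Adj t a → a = v)) ?_ v (Or.inl rfl) t
      intro s w hsw hPs
      rcases hPs with rfl | hs
      · exact Or.inr (hAll w hsw)
      · exact Or.inl (hs w hsw)
    intro a b hab
    rcases hP a with rfl | ha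
    · exact Or.inl rfl
    · exact Or.inr (ha b hab)
  · push_neg at hAll
    obtain ⟨w, hvw, a, hwa, hav⟩ := hAll
    rcases hNS v w hvw with h | h
    · have huw : u = w := h u huv.symm
      subst huw
      refine ⟨v, ?_⟩
      have hP : ∀ t, t = u ∨ t = v := by
        refine fun t => reach_closure hconn (P := fun t => t = u ∨ t = v) ?_ u (Or.inl rfl) t
        intro s w' hsw hPs
        rcases hPs with rfl | rfl
        · exact Or.inr (hu w' hsw)
        · exact Or.inl (h w' hsw)
      intro p q hpq
      rcases hP p with rfl | rfl
      · rcases hP q with rfl | rfl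
        · exact absurd rfl hpq.ne
        · exact Or.inr rfl
      · exact Or.inl rfl
    · exact absurd (h a hwa) hav

lemma star_of_no_mid (hconn : G.Connected)
    (hNS : ¬ ∃ b c, G.Adj b c ∧ (∃ a, G.Adj b a ∧ a ≠ c) ∧ (∃ d, G.Adj c d ∧ d ≠ b)) :
    IsStar G := by
  have hNS' : ∀ b c, G.Adj b c → (∀ a, G.Adj b a → a = c) ∨ (∀ d, G.Adj c d → d = b) := by
    intro b c hbc
    by_cases hb : ∀ a, G.Adj b a → a = c
    · exact Or.inl hb
    · push_neg at hb
      right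
      intro d hd
      by_contra hdb
      exact hNS ⟨b, c, hbc, hb, d, hd, hdb⟩
  by_cases hE : ∃ p q, G.Adj p q
  · obtain ⟨p, q, hpq⟩ := hE
    rcases hNS' p q hpq with h | h
    · exact star_aux hconn hNS' hpq h
    · exact star_aux hconn hNS' hpq.symm h
  · push_neg at hE
    obtain ⟨x⟩ := hconn.nonempty
    exact ⟨x, fun a b hab => absurd hab (hE a b)⟩

lemma star_eval {V : Type*} [Fintype V] {G : SimpleGraph V} (hT : G.IsTree)
    (hstar : IsStar G) : rdrNum G = domNum G + rDomNum G := by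
  classical
  have hconn := hT.isConnected
  obtain ⟨x, hx⟩ := hstar
  have hadj : ∀ v, v ≠ x → G.Adj v x := by
    intro v hv
    obtain ⟨p⟩ := hconn.preconnected v x
    cases p with
    | nil => exact absurd rfl hv
    | cons h q =>
      rcases hx h with h1 | h2
      · exact absurd h1 hv
      · exact h2 ▸ h
  have hdommem : (1 : ℕ) ∈ {k | ∃ S : Finset V, IsDomSet G ↑S ∧ S.card = k} := by
    refine ⟨{x}, ?_, Finset.card_singleton x⟩
    intro v hv
    have hvx : v ≠ x := by simpa using hv
    exact ⟨x, by simp, hadj v hvx⟩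
  have hdom : domNum G = 1 := by
    refine le_antisymm (Nat.sInf_le hdommem) ?_
    rw [Nat.one_le_iff_ne_zero]
    intro h0
    rcases Nat.sInf_eq_zero.mp h0 with h | h
    · obtain ⟨S, hS, hcard⟩ := h
      have hSe : S = ∅ := Finset.card_eq_zero.mp hcard
      subst hSe
      obtain ⟨u, hu, _⟩ := hS x (by simp)
      simpa using hu
    · rw [h] at hdommem
      exact hdommem
  have hrdom : rDomNum G = Fintype.card V := by
    refine le_antisymm ?_ ?_
    · refine Nat.sInf_le ⟨Finset.univ, ⟨?_, ?_⟩, Finset.card_univ⟩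
      · intro v hv; exact absurd (by simp) hv
      · intro v hv; exact absurd (by simp) hv
    · apply le_csInf
      · exact ⟨Fintype.card V, Finset.univ,
          ⟨fun v hv => absurd (by simp) hv, fun v hv => absurd (by simp) hv⟩, Finset.card_univ⟩
      · rintro k ⟨S, ⟨hSdom, hSres⟩, rfl⟩
        have key : ∀ u, u ∉ S → u ≠ x → False := by
          intro u hu hux
          obtain ⟨w, hwS, hadjw⟩ := hSdom u (by simpa using hu)
          have hwx : w = x := (hx hadjw).resolve_left hux
          obtain ⟨w', hw'S, hadjw'⟩ := hSres u (by simpa using hu)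
          have hw'x : w' = x := (hx hadjw').resolve_left hux
          rw [hwx] at hwS
          rw [hw'x] at hw'S
          exact hw'S hwS
        have hSuniv : S = Finset.univ := by
          rw [Finset.eq_univ_iff_forall]
          intro v
          by_contra hv
          by_cases hvx : v = x
          · subst hvx
            obtain ⟨u, huS, hadju⟩ := hSres v (by simpa using hv)
            exact key u (by simpa using huS) hadju.ne'
          · exact key v hv hvx
        rw [hSuniv, Finset.card_univ]
  have hrdr : rdrNum G = Fintype.card V + 1 := by
    refine le_antisymm ?_ ?_
    · apply Nat.sInf_le
      refine ⟨fun v => if v = x then 2 else 1, ⟨?_, ?_, ?_, ?_⟩, ?_⟩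
      · intro v; by_cases h : v = x <;> simp [h]
      · intro v hv; by_cases h : v = x <;> simp [h] at hv
      · intro v hv
        have hvx : v ≠ x := by intro h; simp [h] at hv
        exact ⟨x, hadj v hvx, by simp⟩
      · intro v hv; by_cases h : v = x <;> simp [h] at hv
      · have : ∀ v : V, (if v = x then 2 else 1) = 1 + (if v = x then 1 else 0) := by
          intro v; split <;> rfl
        rw [Finset.sum_congr rfl (fun v _ => this v), Finset.sum_add_distrib]
        simp [Finset.sum_ite_eq', Finset.card_univ]
    · apply le_csInf
      · refine ⟨∑ _v : V, 2, fun _ => 2, ⟨?_, ?_, ?_, ?_⟩, rfl⟩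
        · intro v; norm_num
        · intro v hv; simp at hv
        · intro v hv; simp at hv
        · intro v hv; simp at hv
      · rintro k ⟨f, ⟨hf3, hf0, hf1, hf0'⟩, rfl⟩
        have key : ∀ ℓ, ℓ ≠ x → f ℓ = 0 → f x = 0 → False := by
          intro ℓ hℓx hℓ0 hx0
          rcases hf0 ℓ hℓ0 with ⟨u, hu, hu3⟩ | ⟨u, w, hu, hw, huw, hu2, hw2⟩
          · have hux : u = x := (hx hu).resolve_left hℓx
            rw [hux] at hu3
            omega
          · have hux : u = x := (hx hu).resolve_left hℓx
            have hwx : w = x := (hx hw).resolve_left hℓx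
            exact huw (hux.trans hwx.symm)
        have hpos : ∀ v, 1 ≤ f v := by
          intro v
          by_contra h
          have hv0 : f v = 0 := by omega
          obtain ⟨z, hvz, hz0⟩ := hf0' v hv0
          rcases hx hvz with h1 | h1
          · subst h1
            exact key z hvz.ne' hz0 hv0
          · subst h1
            exact key v hvz.ne hv0 hz0
        have hbig : ∃ v, 2 ≤ f v := by
          obtain ⟨v⟩ := hconn.nonempty
          rcases Nat.lt_or_ge (f v) 2 with h | h
          · have hv1 : f v = 1 := by have := hpos v; omega
            obtain ⟨u, _, hu⟩ := hf1 v hv1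
            exact ⟨u, hu⟩
          · exact ⟨v, h⟩
        obtain ⟨v0, hv0⟩ := hbig
        have hlt : (∑ _v : V, 1) < ∑ v, f v :=
          Finset.sum_lt_sum (fun i _ => hpos i) ⟨v0, Finset.mem_univ v0, by omega⟩
        simpa using hlt
  rw [hdom, hrdom, hrdr, add_comm]

lemma strict_lt {V : Type*} [Fintype V] {G : SimpleGraph V} (hT : G.IsTree)
    (hns : ¬ IsStar G) (f : V → ℕ) (hf : IsRDRD G f) :
    domNum G + rDomNum G < ∑ v, f v := by
  classical
  obtain ⟨hf3, hf0, hf1, hf0'⟩ := hf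
  have hconn := hT.isConnected
  set D : Finset V := Finset.univ.filter (fun v => 2 ≤ f v) with hDdef
  set R : Finset V := Finset.univ.filter (fun v => 1 ≤ f v) with hRdef
  have hmemD : ∀ v, v ∈ D ↔ 2 ≤ f v := by intro v; simp [hDdef]
  have hmemR : ∀ v, v ∈ R ↔ 1 ≤ f v := by intro v; simp [hRdef]
  have hDdom : IsDomSet G ↑D := by
    intro v hv
    have hv1 : f v ≤ 1 := by
      by_contra h
      exact hv (Finset.mem_coe.mpr ((hmemD v).mpr (by omega)))
    by_cases hv0 : f v = 0
    · rcases hf0 v hv0 with ⟨u, hu, hu3⟩ | ⟨u, w, hu, hw, _, hu2, hw2⟩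
      · exact ⟨u, Finset.mem_coe.mpr ((hmemD u).mpr (by omega)), hu⟩
      · exact ⟨u, Finset.mem_coe.mpr ((hmemD u).mpr (by omega)), hu⟩
    · have hv1' : f v = 1 := by omega
      obtain ⟨u, hu, hu2⟩ := hf1 v hv1'
      exact ⟨u, Finset.mem_coe.mpr ((hmemD u).mpr hu2), hu⟩
  have hdomle : domNum G ≤ D.card := Nat.sInf_le ⟨D, hDdom, rfl⟩
  have hRdom : IsRDomSet G ↑R := by
    constructor
    · intro v hv
      have hv0 : f v = 0 := by
        by_contra h
        exact hv (Finset.mem_coe.mpr ((hmemR v).mpr (by omega)))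
      rcases hf0 v hv0 with ⟨u, hu, hu3⟩ | ⟨u, w, hu, hw, _, hu2, hw2⟩
      · exact ⟨u, Finset.mem_coe.mpr ((hmemR u).mpr (by omega)), hu⟩
      · exact ⟨u, Finset.mem_coe.mpr ((hmemR u).mpr (by omega)), hu⟩
    · intro v hv
      have hv0 : f v = 0 := by
        by_contra h
        exact hv (Finset.mem_coe.mpr ((hmemR v).mpr (by omega)))
      obtain ⟨u, huv, hu0⟩ := hf0' v hv0
      refine ⟨u, ?_, huv⟩
      intro hu
      have := (hmemR u).mp (Finset.mem_coe.mp hu)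
      omega
  have hrdomle : rDomNum G ≤ R.card := Nat.sInf_le ⟨R, hRdom, rfl⟩
  have hEq : D.card + R.card
      = ∑ v, ((if 2 ≤ f v then 1 else 0) + (if 1 ≤ f v then 1 else 0)) := by
    rw [Finset.sum_add_distrib, hDdef, hRdef, Finset.card_filter, Finset.card_filter]
  have hple : ∀ v ∈ Finset.univ,
      ((if 2 ≤ f v then 1 else 0) + (if 1 ≤ f v then 1 else 0)) ≤ f v := by
    intro v _; split_ifs <;> omega
  have hsum : D.card + R.card ≤ ∑ v, f v := by
    rw [hEq]; exact Finset.sum_le_sum hple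
  by_cases h3 : ∃ v, f v = 3
  · obtain ⟨v3, hv3⟩ := h3
    have hlt : D.card + R.card < ∑ v, f v := by
      rw [hEq]
      exact Finset.sum_lt_sum hple ⟨v3, Finset.mem_univ v3, by rw [hv3]; norm_num⟩
    exact lt_of_le_of_lt (add_le_add hdomle hrdomle) hlt
  · push_neg at h3
    have hf2 : ∀ v, f v ≤ 2 := fun v => by have := hf3 v; have := h3 v; omega
    by_cases h0 : ∃ v, f v = 0
    · obtain ⟨v0, hv00⟩ := h0
      have htwo : ∀ v, f v = 0 →
          ∃ u w, G.Adj v u ∧ G.Adj v w ∧ u ≠ w ∧ f u = 2 ∧ f w = 2 := by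
        intro v hv
        rcases hf0 v hv with ⟨u, _, hu3⟩ | h
        · exact absurd hu3 (h3 u)
        · exact h
      by_cases hgood : ∃ u, 1 ≤ f u ∧ (∃ z, G.Adj u z ∧ f z = 0) ∧
          (∃ w, G.Adj u w ∧ 1 ≤ f w)
      · obtain ⟨u, hu1, ⟨z, huz, hz0⟩, ⟨w, huw, hw1⟩⟩ := hgood
        have huR : u ∈ R := (hmemR u).mpr hu1
        have hR' : IsRDomSet G ↑(R.erase u) := by
          constructor
          · intro v hv
            by_cases hvu : v = u
            · subst hvu
              refine ⟨w, ?_, huw⟩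
              refine Finset.mem_coe.mpr (Finset.mem_erase.mpr ⟨huw.ne', (hmemR w).mpr hw1⟩)
            · have hvR : v ∉ R := by
                intro h
                exact hv (Finset.mem_coe.mpr (Finset.mem_erase.mpr ⟨hvu, h⟩))
              have hv0 : f v = 0 := by
                by_contra h
                exact hvR ((hmemR v).mpr (by omega))
              obtain ⟨a, b, hva, hvb, hab, ha2, hb2⟩ := htwo v hv0
              by_cases hau : a = u
              · refine ⟨b, Finset.mem_coe.mpr (Finset.mem_erase.mpr
                  ⟨by rw [← hau]; exact hab.symm, (hmemR b).mpr (by omega)⟩), hvb⟩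
              · exact ⟨a, Finset.mem_coe.mpr (Finset.mem_erase.mpr
                  ⟨hau, (hmemR a).mpr (by omega)⟩), hva⟩
          · intro v hv
            by_cases hvu : v = u
            · subst hvu
              refine ⟨z, ?_, huz⟩
              intro h
              have := (hmemR z).mp (Finset.mem_erase.mp (Finset.mem_coe.mp h)).2
              omega
            · have hv0 : f v = 0 := by
                by_contra h
                exact hv (Finset.mem_coe.mpr (Finset.mem_erase.mpr
                  ⟨hvu, (hmemR v).mpr (by omega)⟩))
              obtain ⟨a, hva, ha0⟩ := hf0' v hv0
              refine ⟨a, ?_, hva⟩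
              intro h
              have := (hmemR a).mp (Finset.mem_erase.mp (Finset.mem_coe.mp h)).2
              omega
        have hrd' : rDomNum G ≤ (R.erase u).card := Nat.sInf_le ⟨_, hR', rfl⟩
        have hcard : (R.erase u).card < R.card := Finset.card_erase_lt_of_mem huR
        have : domNum G + rDomNum G < D.card + R.card := by omega
        exact lt_of_lt_of_le this hsum
      · have hgood' : ∀ u, 1 ≤ f u → (∃ z, G.Adj u z ∧ f z = 0) →
            ∀ w, G.Adj u w → f w = 0 := by
          intro u h1 h2 w hw
          by_contra hne
          exact hgood ⟨u, h1, h2, w, hw, by omega⟩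
        have hP : ∀ t, f t = 0 ∨ (f t = 2 ∧ ∀ w, G.Adj t w → f w = 0) := by
          intro t
          refine reach_closure hconn
            (P := fun t => f t = 0 ∨ (f t = 2 ∧ ∀ w, G.Adj t w → f w = 0)) ?_ v0
            (Or.inl hv00) t
          intro s w hsw hPs
          rcases hPs with hs0 | ⟨hs2, hall⟩
          · by_cases hw0 : f w = 0
            · exact Or.inl hw0
            · have hw1 : 1 ≤ f w := by omega
              have hallw : ∀ a, G.Adj w a → f a = 0 := hgood' w hw1 ⟨s, hsw.symm, hs0⟩
              right
              refine ⟨?_, hallw⟩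
              rcases Nat.lt_or_ge (f w) 2 with h | h
              · have hw1' : f w = 1 := by omega
                obtain ⟨a, hwa, ha2⟩ := hf1 w hw1'
                have := hallw a hwa
                omega
              · have := hf2 w; omega
          · exact Or.inl (hall w hsw)
        set Z : Finset V := Finset.univ.filter (fun v => f v = 0) with hZdef
        have hmemZ : ∀ v, v ∈ Z ↔ f v = 0 := by intro v; simp [hZdef]
        have hZdom : IsDomSet G ↑Z := by
          intro v hv
          have hv0 : f v ≠ 0 := fun h => hv (Finset.mem_coe.mpr ((hmemZ v).mpr h))
          rcases hP v with h | ⟨hv2, hall⟩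
          · exact absurd h hv0
          · have hvne : v ≠ v0 := by intro h; rw [h, hv00] at hv2; omega
            obtain ⟨u, hvu⟩ := exists_adj hconn hvne
            exact ⟨u, Finset.mem_coe.mpr ((hmemZ u).mpr (hall u hvu)), hvu⟩
        have hZle : domNum G ≤ Z.card := Nat.sInf_le ⟨Z, hZdom, rfl⟩
        -- edge counting
        haveI : Fintype G.edgeSet := Fintype.ofFinite _
        have hch : ∀ v : V, v ∈ Z → ∃ p : V × V,
            G.Adj v p.1 ∧ G.Adj v p.2 ∧ p.1 ≠ p.2 ∧ f p.1 = 2 ∧ f p.2 = 2 := by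
          intro v hv
          obtain ⟨a, b, h1, h2, h3', h4, h5⟩ := htwo v ((hmemZ v).mp hv)
          exact ⟨(a, b), h1, h2, h3', h4, h5⟩
        choose pair hp1 hp2 hpne hpf1 hpf2 using hch
        let emap : {a // a ∈ Z} × Bool → Sym2 V := fun q =>
          if q.2 then s(q.1.1, (pair q.1.1 q.1.2).1) else s(q.1.1, (pair q.1.1 q.1.2).2)
        have hmaps : ∀ q, emap q ∈ G.edgeFinset := by
          rintro ⟨⟨v, hv⟩, b⟩
          cases b <;> simp only [emap, if_true, if_false, Bool.false_eq_true, ite_false,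
            ite_true, SimpleGraph.mem_edgeFinset, SimpleGraph.mem_edgeSet]
          · exact hp2 v hv
          · exact hp1 v hv
        have hzero : ∀ q : {a // a ∈ Z} × Bool, ∃ a b : V,
            emap q = s(a, b) ∧ f a = 0 ∧ f b = 2 := by
          rintro ⟨⟨v, hv⟩, b⟩
          cases b
          · exact ⟨v, (pair v hv).2, by simp [emap], (hmemZ v).mp hv, hpf2 v hv⟩
          · exact ⟨v, (pair v hv).1, by simp [emap], (hmemZ v).mp hv, hpf1 v hv⟩
        have hinj : Function.Injective emap := by
          rintro ⟨⟨v, hv⟩, b⟩ ⟨⟨v', hv'⟩, b'⟩ he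
          have hv0 : f v = 0 := (hmemZ v).mp hv
          have hv'0 : f v' = 0 := (hmemZ v').mp hv'
          cases b <;> cases b' <;>
            simp only [emap, Bool.false_eq_true, ite_false, ite_true, Sym2.eq_iff] at he
          · rcases he with ⟨h1, h2⟩ | ⟨h1, h2⟩
            · subst h1; simp [Prod.ext_iff, Subtype.ext_iff, h2]
            · have := hpf2 v' hv'; rw [← h1] at this; omega
          · rcases he with ⟨h1, h2⟩ | ⟨h1, h2⟩
            · subst h1
              have h2' : pair v hv = pair v hv' := by rfl
              have := hpne v hv
              rw [h2', h2] at this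
              exact absurd rfl this
            · have := hpf1 v' hv'; rw [← h1] at this; omega
          · rcases he with ⟨h1, h2⟩ | ⟨h1, h2⟩
            · subst h1
              have := hpne v hv
              rw [h2] at this
              exact absurd rfl this
            · have := hpf2 v' hv'; rw [← h1] at this; omega
          · rcases he with ⟨h1, h2⟩ | ⟨h1, h2⟩
            · subst h1; simp [Prod.ext_iff, Subtype.ext_iff, h2]
            · have := hpf1 v' hv'; rw [← h1] at this; omega
        set K : Finset (Sym2 V) := Finset.univ.image emap with hKdef
        obtain ⟨z0, hvz0, hz00⟩ := hf0' v0 hv00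
        have he0 : s(v0, z0) ∈ G.edgeFinset := by
          rw [SimpleGraph.mem_edgeFinset, SimpleGraph.mem_edgeSet]; exact hvz0
        have he0K : s(v0, z0) ∉ K := by
          intro h
          rw [hKdef, Finset.mem_image] at h
          obtain ⟨q, _, hq⟩ := h
          obtain ⟨a, b, hab, ha0, hb2⟩ := hzero q
          rw [hab, Sym2.eq_iff] at hq
          rcases hq with ⟨h1, h2⟩ | ⟨h1, h2⟩
          · rw [h2, hz00] at hb2; omega
          · rw [h2, hv00] at hb2; omega
        have hKcard : K.card = 2 * Z.card := by
          rw [hKdef, Finset.card_image_of_injective _ hinj, Finset.card_univ,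
            Fintype.card_prod, Fintype.card_coe, Fintype.card_bool]
          ring
        have hsub : insert (s(v0, z0)) K ⊆ G.edgeFinset := by
          intro e he
          rcases Finset.mem_insert.mp he with rfl | heK
          · exact he0
          · rw [hKdef, Finset.mem_image] at heK
            obtain ⟨q, _, hq⟩ := heK
            exact hq ▸ hmaps q
        have hcount : 2 * Z.card + 1 ≤ G.edgeFinset.card := by
          have := Finset.card_le_card hsub
          rw [Finset.card_insert_of_notMem he0K, hKcard] at this
          omega
        have hEdges : G.edgeFinset.card + 1 = Fintype.card V := hT.card_edgeFinset
        have hpart : Z.card + D.card = Fintype.card V := by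
          have hDalt : D = Finset.univ.filter (fun v => ¬ f v = 0) := by
            ext v
            rw [hmemD, Finset.mem_filter]
            constructor
            · intro h; exact ⟨Finset.mem_univ v, by omega⟩
            · rintro ⟨-, h⟩
              rcases hP v with h' | ⟨h', -⟩
              · exact absurd h' h
              · omega
          rw [hZdef, hDalt]
          exact Finset.card_filter_add_card_filter_not _
        have hDZ : Z.card + 2 ≤ D.card := by omega
        have h1 : domNum G + rDomNum G < D.card + R.card := by omega
        exact lt_of_lt_of_le h1 hsum
    · push_neg at h0
      have hf1' : ∀ v, 1 ≤ f v := fun v => by have := h0 v; omega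
      have hRuniv : R = Finset.univ := by
        rw [Finset.eq_univ_iff_forall]
        intro v
        exact (hmemR v).mpr (hf1' v)
      have hmid : ∃ b c, G.Adj b c ∧ (∃ a, G.Adj b a ∧ a ≠ c) ∧
          (∃ d, G.Adj c d ∧ d ≠ b) := by
        by_contra hNS
        exact hns (star_of_no_mid hconn hNS)
      obtain ⟨b, c, hbc, ⟨a, hba, hac⟩, ⟨d, hcd, hdb⟩⟩ := hmid
      set S : Finset V := Finset.univ \ {b, c} with hSdef
      have hSmem : ∀ v, v ∈ S ↔ (v ≠ b ∧ v ≠ c) := by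
        intro v; simp [hSdef]
      have hSr : IsRDomSet G ↑S := by
        constructor
        · intro v hv
          have hvbc : v = b ∨ v = c := by
            by_contra h
            push_neg at h
            exact hv (Finset.mem_coe.mpr ((hSmem v).mpr h))
          rcases hvbc with rfl | rfl
          · exact ⟨a, Finset.mem_coe.mpr ((hSmem a).mpr ⟨hba.ne', hac⟩), hba⟩
          · exact ⟨d, Finset.mem_coe.mpr ((hSmem d).mpr ⟨hdb, hcd.ne'⟩), hcd⟩
        · intro v hv
          have hvbc : v = b ∨ v = c := by
            by_contra h
            push_neg at h
            exact hv (Finset.mem_coe.mpr ((hSmem v).mpr h))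
          rcases hvbc with rfl | rfl
          · refine ⟨c, ?_, hbc⟩
            intro h
            exact ((hSmem c).mp (Finset.mem_coe.mp h)).2 rfl
          · refine ⟨b, ?_, hbc.symm⟩
            intro h
            exact ((hSmem b).mp (Finset.mem_coe.mp h)).1 rfl
      have hScard : S.card = Fintype.card V - 2 := by
        rw [hSdef, Finset.card_sdiff_of_subset (by simp), Finset.card_univ]
        congr 1
        rw [Finset.card_insert_of_notMem (by simp [hbc.ne]), Finset.card_singleton]
      have hrd : rDomNum G ≤ Fintype.card V - 2 := Nat.sInf_le ⟨S, hSr, hScard⟩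
      have hn2 : 2 ≤ Fintype.card V := by
        have : Nontrivial V := ⟨b, c, hbc.ne⟩
        exact Fintype.one_lt_card
      have hsum2 : D.card + Fintype.card V ≤ ∑ v, f v := by
        rw [hRuniv, Finset.card_univ] at hsum
        exact hsum
      omega

end RDRDAux

theorem stmt_14 {V : Type*} [Fintype V] (G : SimpleGraph V) (hT : G.IsTree) :
    rdrNum G = domNum G + rDomNum G ↔ IsStar G := by
  constructor
  · intro heq
    by_contra hns
    have hne : Set.Nonempty {k | ∃ f : V → ℕ, IsRDRD G f ∧ ∑ v, f v = k} := by
      refine ⟨∑ _v : V, 2, fun _ => 2, ⟨?_, ?_, ?_, ?_⟩, rfl⟩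
      · intro v; norm_num
      · intro v hv; simp at hv
      · intro v hv; simp at hv
      · intro v hv; simp at hv
    obtain ⟨f, hf, hsum⟩ := Nat.sInf_mem hne
    have hlt := RDRDAux.strict_lt hT hns f hf
    have hEq2 : ∑ v, f v = rdrNum G := hsum
    rw [heq] at hEq2
    rw [hEq2] at hlt
    exact lt_irrefl _ hlt
  · intro hstar
    exact RDRDAux.star_eval hT hstar
end

section
/- For any tree T, γ_rdR(T) = γ_r(T) + 1 if and only if T is a star. -/
open Finset

section Aux

variable {V : Type*} [Fintype V] (G : SimpleGraph V)

lemma rDomNum_le {S : Finset V} (hS : IsRDomSet G ↑S) : rDomNum G ≤ S.card := by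
  unfold rDomNum
  exact Nat.sInf_le ⟨S, hS, rfl⟩

lemma rdrNum_le {f : V → ℕ} (hf : IsRDRD G f) : rdrNum G ≤ ∑ v, f v := by
  unfold rdrNum
  exact Nat.sInf_le ⟨f, hf, rfl⟩

lemma isRDRD_const_two : IsRDRD G (fun _ => 2) :=
  ⟨fun _ => by norm_num, fun v h => by simp at h, fun v h => by simp at h,
    fun v h => by simp at h⟩

lemma support_rdom {f : V → ℕ} (hf : IsRDRD G f) :
    IsRDomSet G ↑(Finset.univ.filter fun v => f v ≠ 0) := by
  constructor
  · intro v hv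
    simp only [Finset.coe_filter, Set.mem_setOf_eq, Finset.mem_univ, true_and, not_not] at hv
    rcases hf.2.1 v hv with ⟨u, hadj, hu⟩ | ⟨u, w, hadj, _, _, hu, _⟩
    · exact ⟨u, by simp [hu], hadj⟩
    · exact ⟨u, by simp [hu], hadj⟩
  · intro v hv
    simp only [Finset.coe_filter, Set.mem_setOf_eq, Finset.mem_univ, true_and, not_not] at hv
    obtain ⟨u, hadj, hu⟩ := hf.2.2.2 v hv
    exact ⟨u, by simp [hu], hadj⟩

lemma sum_ge2 (f : V → ℕ) :
    (Finset.univ.filter fun v => f v ≠ 0).card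
      + ∑ v ∈ Finset.univ.filter (fun v => 2 ≤ f v), (f v - 1) ≤ ∑ v, f v := by
  rw [Finset.card_filter, Finset.sum_filter, ← Finset.sum_add_distrib]
  refine Finset.sum_le_sum fun v _ => ?_
  by_cases h : f v = 0 <;> by_cases h2 : 2 ≤ f v <;> simp [h, h2] <;> omega

lemma exists_two [Nonempty V] {f : V → ℕ} (hf : IsRDRD G f) : ∃ y, 2 ≤ f y := by
  obtain ⟨v⟩ := ‹Nonempty V›
  by_contra h
  push_neg at h
  have hv : f v = 0 ∨ f v = 1 := by have := h v; omega
  rcases hv with h0 | h1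
  · rcases hf.2.1 v h0 with ⟨u, _, hu⟩ | ⟨u, w, _, _, _, hu, _⟩
    · have := h u; omega
    · have := h u; omega
  · obtain ⟨u, _, hu⟩ := hf.2.2.1 v h1
    have := h u; omega

omit [Fintype V] in
lemma star_rdom_univ {x : V} (hx : ∀ ⦃a b : V⦄, G.Adj a b → a = x ∨ b = x)
    {S : Set V} (hS : IsRDomSet G S) : ∀ v, v ∈ S := by
  intro v
  by_contra hv
  obtain ⟨u, huS, hadj⟩ := hS.1 v hv
  obtain ⟨w, hwS, hadjw⟩ := hS.2 v hv
  by_cases hvx : v = x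
  · subst hvx
    obtain ⟨u', hu'S, hadj'⟩ := hS.1 w hwS
    rcases hx hadj' with h | h
    · exact hadjw.ne h.symm
    · exact hv (h ▸ hu'S)
  · have hu : u = x := (hx hadj).resolve_left hvx
    have hw : w = x := (hx hadjw).resolve_left hvx
    exact hwS (by rw [hw, ← hu]; exact huS)

omit [Fintype V] in
lemma adj_center (hC : G.Connected) {x v : V}
    (hx : ∀ ⦃a b : V⦄, G.Adj a b → a = x ∨ b = x) (hvx : v ≠ x) : G.Adj v x := by
  obtain ⟨p⟩ := hC.preconnected v x
  cases p with
  | nil => exact absurd rfl hvx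
  | cons h q =>
    rcases hx h with h1 | h2
    · exact absurd h1 hvx
    · exact h2 ▸ h

omit [Fintype V] in
lemma no_triangle (hT : G.IsTree) {a b y : V} (hay : G.Adj a y) (hby : G.Adj b y)
    (hab : G.Adj a b) : False := by
  have hp1 : (SimpleGraph.Walk.cons hay SimpleGraph.Walk.nil : G.Walk a y).IsPath := by
    simp [hay.ne]
  have hp2 : (SimpleGraph.Walk.cons hab (SimpleGraph.Walk.cons hby SimpleGraph.Walk.nil) :
      G.Walk a y).IsPath := by
    simp [SimpleGraph.Walk.cons_isPath_iff, hab.ne, hay.ne, hby.ne]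
  have := (hT.existsUnique_path a y).unique hp1 hp2
  simpa using congrArg SimpleGraph.Walk.length this

lemma star_rDomNum {x : V} (hx : ∀ ⦃a b : V⦄, G.Adj a b → a = x ∨ b = x) :
    rDomNum G = Fintype.card V := by
  have huniv : IsRDomSet G ↑(Finset.univ : Finset V) := by
    constructor <;> intro v hv <;> simp at hv
  apply le_antisymm
  · simpa using rDomNum_le G huniv
  · have hne' : {k | ∃ S : Finset V, IsRDomSet G ↑S ∧ S.card = k}.Nonempty :=
      ⟨_, Finset.univ, huniv, rfl⟩
    unfold rDomNum
    apply le_csInf hne'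
    rintro k ⟨S, hS, rfl⟩
    have hSu : S = Finset.univ :=
      Finset.eq_univ_iff_forall.mpr fun v => Finset.mem_coe.mp (star_rdom_univ G hx hS v)
    simp [hSu]

lemma star_rdrNum (hC : G.Connected) {x : V}
    (hx : ∀ ⦃a b : V⦄, G.Adj a b → a = x ∨ b = x) :
    rdrNum G = Fintype.card V + 1 := by
  classical
  have hne : Nonempty V := hC.nonempty
  have hfd : IsRDRD G (fun v => if v = x then 2 else 1) := by
    refine ⟨fun v => by dsimp only; split <;> omega,
      fun v hv => by dsimp only at hv; split at hv <;> omega,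
      fun v hv => ?_, fun v hv => by dsimp only at hv; split at hv <;> omega⟩
    have hvx : v ≠ x := by intro h; simp [h] at hv
    exact ⟨x, adj_center G hC hx hvx, by simp⟩
  have hsum : ∑ v, (if v = x then 2 else 1) = Fintype.card V + 1 := by
    have h1 : ∀ v : V, (if v = x then 2 else 1) = 1 + (if v = x then 1 else 0) := by
      intro v; split <;> rfl
    rw [Finset.sum_congr rfl fun v _ => h1 v, Finset.sum_add_distrib]
    simp
  apply le_antisymm
  · calc rdrNum G ≤ ∑ v, (if v = x then 2 else 1) := rdrNum_le G hfd
      _ = Fintype.card V + 1 := hsum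
  · have hne' : {k | ∃ f : V → ℕ, IsRDRD G f ∧ ∑ v, f v = k}.Nonempty :=
      ⟨_, _, hfd, hsum⟩
    unfold rdrNum
    apply le_csInf hne'
    rintro k ⟨f, hf, rfl⟩
    have hS : IsRDomSet G ↑(Finset.univ.filter fun v => f v ≠ 0) := support_rdom G hf
    have hSu : (Finset.univ.filter fun v => f v ≠ 0) = Finset.univ :=
      Finset.eq_univ_iff_forall.mpr fun v => Finset.mem_coe.mp (star_rdom_univ G hx hS v)
    obtain ⟨y, hy⟩ := exists_two G hf
    have hge := sum_ge2 f
    rw [hSu, Finset.card_univ] at hge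
    have hyT : y ∈ Finset.univ.filter (fun v => 2 ≤ f v) := by simp [hy]
    have hsum1 : 1 ≤ ∑ v ∈ Finset.univ.filter (fun v => 2 ≤ f v), (f v - 1) := by
      calc (1 : ℕ) ≤ f y - 1 := by omega
        _ ≤ _ := Finset.single_le_sum (f := fun v => f v - 1)
            (fun v _ => Nat.zero_le _) hyT
    omega

end Aux

theorem stmt_15 {V : Type*} [Fintype V] (G : SimpleGraph V) (hT : G.IsTree) :
    rdrNum G = rDomNum G + 1 ↔ IsStar G := by
  have hne : Nonempty V := hT.isConnected.nonempty
  constructor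
  · intro heq
    have hset : {k | ∃ f : V → ℕ, IsRDRD G f ∧ ∑ v, f v = k}.Nonempty :=
      ⟨_, _, isRDRD_const_two G, rfl⟩
    obtain ⟨f, hf, hsum⟩ := Nat.sInf_mem hset
    have hsum' : ∑ v, f v = rDomNum G + 1 := by rw [hsum]; exact heq
    clear hsum
    obtain ⟨S, hSdef⟩ : ∃ S, S = Finset.univ.filter fun v => f v ≠ 0 := ⟨_, rfl⟩
    obtain ⟨T, hTdef⟩ : ∃ T, T = Finset.univ.filter fun v => 2 ≤ f v := ⟨_, rfl⟩
    have hmemTiff : ∀ v, v ∈ T ↔ 2 ≤ f v := by intro v; rw [hTdef]; simp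
    have hS : IsRDomSet G ↑S := hSdef ▸ support_rdom G hf
    have hrd : rDomNum G ≤ S.card := rDomNum_le G hS
    obtain ⟨y, hy⟩ := exists_two G hf
    have hyT : y ∈ T := (hmemTiff y).mpr hy
    have hge : S.card + ∑ v ∈ T, (f v - 1) ≤ ∑ v, f v := by
      rw [hSdef, hTdef]; exact sum_ge2 f
    have hsmall : ∑ v ∈ T, (f v - 1) ≤ 1 := by omega
    have hterm : ∀ v ∈ T, 1 ≤ f v - 1 := by
      intro v hv
      have := (hmemTiff v).mp hv
      omega
    have hcard : T.card ≤ 1 := by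
      calc T.card = ∑ _v ∈ T, 1 := by simp
        _ ≤ ∑ v ∈ T, (f v - 1) := Finset.sum_le_sum hterm
        _ ≤ 1 := hsmall
    have hmemT : ∀ v, 2 ≤ f v → v = y := by
      intro v hv
      exact Finset.card_le_one.mp hcard v ((hmemTiff v).mpr hv) y hyT
    have hTy : T = {y} :=
      Finset.eq_singleton_iff_unique_mem.mpr
        ⟨hyT, fun z hz => hmemT z ((hmemTiff z).mp hz)⟩
    have hfy : f y = 2 := by
      have h2 : ∑ v ∈ T, (f v - 1) = f y - 1 := by rw [hTy, Finset.sum_singleton]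
      omega
    have hnozero : ∀ v, f v ≠ 0 := by
      intro v h0
      rcases hf.2.1 v h0 with ⟨u, _, hu⟩ | ⟨u, w, _, _, huw, hu, hw⟩
      · have := hmemT u (by omega); rw [this] at hu; omega
      · exact huw ((hmemT u (by omega)).trans (hmemT w (by omega)).symm)
    have hadjy : ∀ v, v ≠ y → G.Adj v y := by
      intro v hvy
      have hf1 : f v = 1 := by
        have h0 := hnozero v
        rcases Nat.lt_or_ge (f v) 2 with h | h
        · omega
        · exact absurd (hmemT v h) hvy
      obtain ⟨u, hadj, hu⟩ := hf.2.2.1 v hf1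
      rwa [hmemT u hu] at hadj
    refine ⟨y, fun a b hab => ?_⟩
    by_contra h
    push_neg at h
    exact no_triangle G hT (hadjy a h.1) (hadjy b h.2) hab
  · rintro ⟨x, hx⟩
    rw [star_rdrNum G hT.isConnected hx, star_rDomNum G hx]
end
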